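/- Consider the Braess graph with vertices s, u, v, t, edges (s,u), (v,t) with latency l(x) = x, edges (s,v), (u,t) with constant latency 1, and edge (u,v) with latency 0. For any Stackelberg routing g, if the induced Wardrop equilibrium f(g) has strictly positive flow on edge (u,v), then the total demand d satisfies d < 2 and the common shortest-path delay at the total flow f(g)+g is at most 2. Furthermore, if g_e = 0 for every edge of the Braess graph and the demand d ∈ [1/2, 3/2], then f_{uv}(g) ≥ 1/2. -/
import Mathlib


/-- Claim 5.10. In the Braess graph with edges `(s,u)`, `(v,t)` of latency `x`,
edges `(s,v)`, `(u,t)` of constant latency `1`, and edge `(u,v)` of latency `0`,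
let `g` be a Stackelberg routing with path flows `g₁` (on `s-u-t`), `g₂` (on
`s-v-t`), `g₃` (on `s-u-v-t`), and let the induced Wardrop equilibrium `f(g)` of
the remaining demand `d − (g₁+g₂+g₃)` have path flows `z₁, z₂, z₃`. If `f(g)` has
strictly positive flow on edge `(u,v)` (i.e. `z₃ > 0`), then `d < 2` and the
shortest-path delay at the total flow `f(g)+g` is at most `2`. Furthermore, if
`g = 0` on every edge and `d ∈ [1/2, 3/2]`, then `f_{uv}(g) = z₃ ≥ 1/2`. -/
theorem braess_stackelberg_claim
    (d g1 g2 g3 z1 z2 z3 c1 c2 c3 : ℝ)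
    (hg1 : 0 ≤ g1) (hg2 : 0 ≤ g2) (hg3 : 0 ≤ g3)
    (hz1 : 0 ≤ z1) (hz2 : 0 ≤ z2) (hz3 : 0 ≤ z3)
    (hgd : g1 + g2 + g3 ≤ d)
    (hzsum : z1 + z2 + z3 = d - (g1 + g2 + g3))
    -- path latencies at the total flow h = f(g) + g
    -- (edge flows: h_su = z1+z3+g1+g3, h_ut = z1+g1, h_sv = z2+g2, h_vt = z2+z3+g2+g3, h_uv = z3+g3)
    (hc1 : c1 = (z1 + z3 + g1 + g3) + 1)
    (hc2 : c2 = 1 + (z2 + z3 + g2 + g3))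
    (hc3 : c3 = (z1 + z3 + g1 + g3) + (z2 + z3 + g2 + g3))
    -- `f(g)` is a Wardrop equilibrium of the modified game
    (heq1 : 0 < z1 → c1 ≤ c2 ∧ c1 ≤ c3)
    (heq2 : 0 < z2 → c2 ≤ c1 ∧ c2 ≤ c3)
    (heq3 : 0 < z3 → c3 ≤ c1 ∧ c3 ≤ c2) :
    (0 < z3 → d < 2 ∧ min (min c1 c2) c3 ≤ 2) ∧
    (g1 = 0 → g2 = 0 → g3 = 0 → 1 / 2 ≤ d → d ≤ 3 / 2 → 1 / 2 ≤ z3) := by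
  constructor
  · intro h3
    obtain ⟨ha, hb⟩ := heq3 h3
    constructor
    · nlinarith
    · have : c3 ≤ 2 := by nlinarith
      calc min (min c1 c2) c3 ≤ c3 := min_le_right _ _
        _ ≤ 2 := this
  · intro e1 e2 e3 hd1 hd2
    subst e1 e2 e3
    rcases eq_or_lt_of_le hz1 with h1 | h1
    · rcases eq_or_lt_of_le hz2 with h2 | h2
      · nlinarith
      · obtain ⟨ha, hb⟩ := heq2 h2
        nlinarith
    · obtain ⟨ha, hb⟩ := heq1 h1
      rcases eq_or_lt_of_le hz2 with h2 | h2
      · nlinarith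
      · obtain ⟨hc, hd'⟩ := heq2 h2
        nlinarith
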